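/- Let T be an ℝ-tree with an isometric action of the free group F(A), let P ∈ T, and suppose BBT(A,P) = C, i.e. for every reduced word w over A and every prefix v of w, the point vP lies within distance C of the segment [P, wP]. Then for every cyclically reduced word w over A and every subword u of w, one has d(uP, P) ≤ 2C + ‖w‖_T. -/

import Mathlib

open Metric

/-- An ℝ-tree: a 0-hyperbolic metric space in which distances are realized
geodesically (for any two points and any intermediate value `r` of the distance
there is a point at distance `r` from the first and `dist x y - r` from the second). -/
def IsRTree (T : Type*) [MetricSpace T] : Prop :=
  (∀ x y z w : T, dist x y + dist z w ≤ max (dist x z + dist y w) (dist x w + dist y z)) ∧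
  (∀ x y : T, ∀ r ∈ Set.Icc (0:ℝ) (dist x y), ∃ z : T, dist x z = r ∧ dist z y = dist x y - r)

/-- The geodesic segment `[x,y]` in an ℝ-tree: the set of points between `x` and `y`. -/
def seg {T : Type*} [MetricSpace T] (x y : T) : Set T :=
  {z | dist x z + dist z y = dist x y}

/-- Translation length of a group element acting on `T`. -/
noncomputable def transLen (T : Type*) [MetricSpace T] {G : Type*} [Group G] [MulAction G T]
    (g : G) : ℝ :=
  ⨅ P : T, dist P (g • P)

/-- A reduced word (as a list of letters with exponents) is cyclically reduced if its
last letter is not the inverse of its first letter. -/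
def IsCyclRed {A : Type*} (l : List (A × Bool)) : Prop :=
  ∀ x ∈ l.getLast?, ∀ y ∈ l.head?, ¬ (x.1 = y.1 ∧ x.2 = !y.2)

namespace SubwordProof




variable {A : Type*}

/-- non-cancellation between adjacent letters -/
abbrev NC : (A × Bool) → (A × Bool) → Prop := fun a b => ¬ (a.1 = b.1 ∧ a.2 = !b.2)

/-- cyclic non-cancellation -/
def COK (l : List (A × Bool)) : Prop := ∀ x ∈ l.getLast?, ∀ y ∈ l.head?, NC x y

set_option linter.unusedSectionVars false
variable [DecidableEq A]

lemma reduce_of_chain' : ∀ {l : List (A × Bool)}, l.Chain' NC → FreeGroup.reduce l = l := by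
  intro l
  induction l with
  | nil => intro _; rfl
  | cons x t ih =>
    intro h
    obtain ⟨hx, ht⟩ := List.isChain_cons.1 h
    rw [FreeGroup.reduce.cons, ih ht]
    cases t with
    | nil => rfl
    | cons hd tl =>
      show (if x.1 = hd.1 ∧ x.2 = !hd.2 then tl else x :: hd :: tl) = x :: hd :: tl
      rw [if_neg (hx hd rfl)]

lemma chain'_of_reduce : ∀ {l : List (A × Bool)}, FreeGroup.reduce l = l → l.Chain' NC := by
  intro l
  induction l with
  | nil => intro _; exact List.isChain_nil
  | cons x t ih =>
    intro h
    rw [FreeGroup.reduce.cons] at h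
    cases hres : FreeGroup.reduce t with
    | nil =>
      rw [hres] at h
      change [x] = x :: t at h
      have ht : t = [] := (List.cons_eq_cons.mp h).2.symm
      subst ht
      exact List.isChain_singleton x
    | cons hd tl =>
      rw [hres] at h
      change (if x.1 = hd.1 ∧ x.2 = !hd.2 then tl else x :: hd :: tl) = x :: t at h
      by_cases hc : x.1 = hd.1 ∧ x.2 = !hd.2
      · rw [if_pos hc] at h
        have h1 : (FreeGroup.reduce t).length ≤ t.length :=
          FreeGroup.Red.length_le FreeGroup.reduce.red
        rw [hres, h] at h1
        simp at h1
      · rw [if_neg hc] at h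
        have ht : t = hd :: tl := (List.cons_eq_cons.mp h).2.symm
        have iht : t.Chain' NC := ih (by rw [hres, ht])
        refine List.isChain_cons.2 ⟨?_, iht⟩
        intro y hy
        rw [ht] at hy
        simp only [List.head?_cons, Option.mem_def, Option.some.injEq] at hy
        subst hy
        exact hc

lemma rot {a b : List (A × Bool)} (hc : (a ++ b).Chain' NC) (hk : COK (a ++ b)) :
    (b ++ a).Chain' NC ∧ COK (b ++ a) := by
  obtain ⟨ha, hb, hab⟩ := List.isChain_append.1 hc
  refine ⟨hb.append ha ?_, ?_⟩
  · intro x hx y hy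
    exact hk x (List.mem_getLast?_append_of_mem_getLast? hx)
      y (List.mem_head?_append_of_mem_head? hy)
  · intro x hx y hy
    rcases eq_or_ne a [] with rfl | hA
    · rw [List.append_nil] at hx hy
      exact hk x (by simpa using hx) y (by simpa using hy)
    rcases eq_or_ne b [] with rfl | hB
    · rw [List.nil_append] at hx hy
      exact hk x (by simpa using hx) y (by simpa using hy)
    rw [List.getLast?_append_of_ne_nil b hA] at hx
    rw [List.head?_append_of_ne_nil b hB] at hy
    exact hab x hx y hy

/-- n-fold concatenation -/
def pw (l : List (A × Bool)) : ℕ → List (A × Bool)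
  | 0 => []
  | n + 1 => l ++ pw l n

lemma head?_pw {l : List (A × Bool)} : ∀ n x, x ∈ (pw l n).head? → x ∈ l.head?
  | 0, x, h => by simp [pw] at h
  | n + 1, x, h => by
    rcases eq_or_ne l [] with rfl | hl
    · rw [pw, List.nil_append] at h; exact head?_pw n x h
    · rwa [pw, List.head?_append_of_ne_nil l hl] at h

lemma chain'_pw {l : List (A × Bool)} (hc : l.Chain' NC) (hk : COK l) :
    ∀ n, (pw l n).Chain' NC
  | 0 => List.isChain_nil
  | n + 1 => by
    show (l ++ pw l n).Chain' NC
    exact hc.append (chain'_pw hc hk n) (fun x hx y hy => hk x hx y (head?_pw n y hy))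

lemma pw_add {l : List (A × Bool)} : ∀ m n, pw l (m + n) = pw l m ++ pw l n
  | 0, n => by rw [Nat.zero_add]; exact (List.nil_append _).symm
  | m + 1, n => by
    have h : m + 1 + n = (m + n) + 1 := by omega
    rw [h]
    show l ++ pw l (m + n) = (l ++ pw l m) ++ pw l n
    rw [pw_add m n, List.append_assoc]

lemma mk_pow (l : List (A × Bool)) : ∀ n, (FreeGroup.mk l) ^ n = FreeGroup.mk (pw l n)
  | 0 => by rw [pow_zero]; rfl
  | n + 1 => by rw [pow_succ', mk_pow l n, FreeGroup.mul_mk]; rfl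

lemma toWord_pow {l : List (A × Bool)} (hc : l.Chain' NC) (hk : COK l) (n : ℕ) :
    ((FreeGroup.mk l) ^ n).toWord = pw l n := by
  rw [mk_pow, FreeGroup.toWord_mk, reduce_of_chain' (chain'_pw hc hk n)]



lemma gromov {T : Type*} [MetricSpace T] {P Q z : T} {C : ℝ}
    (h : Metric.infDist z (seg P Q) ≤ C) :
    dist P z + dist z Q ≤ dist P Q + 2 * C := by
  have hne : (seg P Q).Nonempty := ⟨P, by simp [seg]⟩
  refine le_of_forall_pos_le_add ?_
  intro ε hε
  have h2 : Metric.infDist z (seg P Q) < C + ε / 2 := lt_of_le_of_lt h (by linarith)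
  obtain ⟨x, hxs, hxd⟩ := (Metric.infDist_lt_iff hne).1 h2
  have hseg : dist P x + dist x Q = dist P Q := hxs
  have t1 : dist P z ≤ dist P x + dist x z := dist_triangle _ _ _
  have t2 : dist z Q ≤ dist z x + dist x Q := dist_triangle _ _ _
  have hcomm : dist x z = dist z x := dist_comm _ _
  linarith

lemma core {C Λ L : ℝ} (hC : 0 ≤ C) (D : ℕ → ℝ) (hD0 : D 0 = 0)
    (hDle : ∀ n : ℕ, D n ≤ n * Λ + 2 * C)
    (hKEY : ∀ j : ℕ, 2 * L + D j ≤ D 1 + D (j + 1) + 2 * C) :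
    L ≤ Λ + 2 * C := by
  have main : ∀ N : ℕ, 1 ≤ N → L ≤ Λ + 2 * C + C / N := by
    intro N hN
    by_contra hcon
    push_neg at hcon
    have hNpos : (0 : ℝ) < N := by exact_mod_cast hN
    have hstep : ∀ j : ℕ, D j + (Λ + 2 * C / N) < D (j + 1) := by
      intro j
      have h1 := hKEY j
      have h2 := hDle 1
      rw [Nat.cast_one, one_mul] at h2
      have h3 : 2 * (C / N) = 2 * C / N := by ring
      linarith
    have hind : ∀ j : ℕ, 1 ≤ j → (j : ℝ) * (Λ + 2 * C / N) < D j := by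
      intro j hj
      induction j, hj using Nat.le_induction with
      | base =>
        have := hstep 0
        rw [hD0] at this
        push_cast
        linarith
      | succ j hj ih =>
        have := hstep j
        push_cast
        push_cast at ih
        linarith
    have hfin := hind N hN
    have hle := hDle N
    have hNe : (N : ℝ) * (Λ + 2 * C / N) = N * Λ + 2 * C := by
      field_simp
    linarith
  by_contra hcon
  push_neg at hcon
  have hδ : 0 < L - (Λ + 2 * C) := by linarith
  obtain ⟨N, hgt⟩ := exists_nat_gt (C / (L - (Λ + 2 * C)))
  have hN0 : (0 : ℝ) < N := lt_of_le_of_lt (div_nonneg hC hδ.le) hgt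
  have hN1 : 1 ≤ N := Nat.one_le_iff_ne_zero.2 (fun h => by simp [h] at hN0)
  have := main N hN1
  have hlt : C / N < L - (Λ + 2 * C) := by
    rw [div_lt_iff₀ hN0, mul_comm]
    calc C = (C / (L - (Λ + 2 * C))) * (L - (Λ + 2 * C)) := (div_mul_cancel₀ _ hδ.ne').symm
    _ < ↑N * (L - (Λ + 2 * C)) := by
        exact mul_lt_mul_of_pos_right hgt hδ
  linarith




end SubwordProof

/-- With a BBT constant `C` for `(A, P)`: for every cyclically reduced word `w` and
every subword `u` of `w` one has `d(uP, P) ≤ 2C + ‖w‖_T`. -/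
theorem subword_dist_le (T : Type*) [MetricSpace T] (hT : IsRTree T)
    {A : Type*} [DecidableEq A] [MulAction (FreeGroup A) T]
    (hiso : ∀ g : FreeGroup A, Isometry fun x : T => g • x)
    (P : T) (C : ℝ) (hC : 0 ≤ C)
    (hBBT : ∀ w v : FreeGroup A, v.toWord <+: w.toWord →
      Metric.infDist (v • P) (seg P (w • P)) ≤ C)
    (w u : FreeGroup A) (hw : IsCyclRed w.toWord)
    (hu : u.toWord <:+: w.toWord) :
    dist (u • P) P ≤ 2 * C + transLen T w := by
  classical
  obtain ⟨p, s, hw_eq⟩ := hu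
  have hsplit : w.toWord = p ++ (u.toWord ++ s) := by rw [← hw_eq, List.append_assoc]
  have hwchain : List.Chain' SubwordProof.NC w.toWord :=
    SubwordProof.chain'_of_reduce (FreeGroup.reduce_toWord w)
  have hwcok : SubwordProof.COK w.toWord := hw
  obtain ⟨hc1, hk1⟩ := SubwordProof.rot (a := p) (b := u.toWord ++ s)
    (hsplit ▸ hwchain) (hsplit ▸ hwcok)
  set l₁ : List (A × Bool) := (u.toWord ++ s) ++ p with hl₁
  set w1 : FreeGroup A := FreeGroup.mk l₁ with hw1def
  set pi : FreeGroup A := FreeGroup.mk p with hpidef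
  have htw : ∀ n : ℕ, (w1 ^ n).toWord = SubwordProof.pw l₁ n := fun n => by
    rw [hw1def, SubwordProof.mk_pow, FreeGroup.toWord_mk,
      SubwordProof.reduce_of_chain' (SubwordProof.chain'_pw hc1 hk1 n)]
  -- distances
  set D : ℕ → ℝ := fun n => dist P ((w1 ^ n) • P) with hD
  have hiso_dist : ∀ (g : FreeGroup A) (x y : T), dist (g • x) (g • y) = dist x y :=
    fun g x y => (hiso g).dist_eq x y
  have hD0 : D 0 = 0 := by simp [hD]
  -- conjugation
  have hconj : w * pi = pi * w1 := by
    conv_lhs => rw [← FreeGroup.mk_toWord (x := w)]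
    rw [hpidef, hw1def, FreeGroup.mul_mk, FreeGroup.mul_mk, hsplit, hl₁]
    rw [List.append_assoc, List.append_assoc]
  have hconjn : ∀ n : ℕ, w ^ n * pi = pi * w1 ^ n := by
    intro n
    induction n with
    | zero => simp
    | succ n ih =>
      rw [pow_succ', pow_succ', mul_assoc, ih, ← mul_assoc, hconj, mul_assoc]
  have hDeq : ∀ n : ℕ, D n = dist (pi • P) ((w ^ n) • (pi • P)) := by
    intro n
    have h1 : pi • ((w1 ^ n) • P) = (w ^ n) • (pi • P) := by
      rw [← mul_smul, ← hconjn n, mul_smul]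
    rw [hD]
    dsimp only
    rw [← hiso_dist pi P ((w1 ^ n) • P), h1]
  -- prefix relations and BBT instances
  have hprefpow : ∀ a b : ℕ, (w1 ^ a).toWord <+: (w1 ^ (a + b)).toWord := by
    intro a b
    rw [htw, htw, SubwordProof.pw_add]
    exact List.prefix_append _ _
  have hG1 : ∀ a b : ℕ, D a + D b ≤ D (a + b) + 2 * C := by
    intro a b
    have hb := SubwordProof.gromov (hBBT (w1 ^ (a + b)) (w1 ^ a) (hprefpow a b))
    have he : dist ((w1 ^ a) • P) ((w1 ^ (a + b)) • P) = D b := by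
      rw [pow_add, mul_smul]
      exact hiso_dist (w1 ^ a) P ((w1 ^ b) • P)
    have hb' : D a + dist ((w1 ^ a) • P) ((w1 ^ (a + b)) • P) ≤ D (a + b) + 2 * C := hb
    rw [he] at hb'
    linarith
  have hupref : ∀ n : ℕ, u.toWord <+: (w1 ^ (n + 1)).toWord := by
    intro n
    rw [htw]
    show u.toWord <+: l₁ ++ SubwordProof.pw l₁ n
    refine ⟨s ++ (p ++ SubwordProof.pw l₁ n), ?_⟩
    rw [hl₁]
    simp [List.append_assoc]
  have hG2 : ∀ n : ℕ,
      dist P (u • P) + dist (u • P) ((w1 ^ (n + 1)) • P) ≤ D (n + 1) + 2 * C := by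
    intro n
    exact SubwordProof.gromov (hBBT (w1 ^ (n + 1)) u (hupref n))
  -- upper bound on D n by translation length
  have hQn : ∀ (Q : T) (n : ℕ), dist Q ((w ^ n) • Q) ≤ n * dist Q (w • Q) := by
    intro Q n
    induction n with
    | zero => simp
    | succ n ih =>
      have h1 : (w ^ (n + 1)) • Q = w • ((w ^ n) • Q) := by rw [pow_succ', mul_smul]
      have h2 : dist Q ((w ^ (n+1)) • Q) ≤ dist Q (w • Q) + dist (w • Q) ((w ^ (n+1)) • Q) :=
        dist_triangle _ _ _
      rw [h1] at h2
      rw [hiso_dist w Q ((w ^ n) • Q)] at h2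
      push_cast
      rw [h1]
      linarith
  have hDQ : ∀ (Q : T) (n : ℕ), D n ≤ 2 * dist (pi • P) Q + n * dist Q (w • Q) := by
    intro Q n
    rw [hDeq n]
    have h4 := dist_triangle4 (pi • P) Q ((w ^ n) • Q) ((w ^ n) • (pi • P))
    rw [hiso_dist (w ^ n) Q (pi • P)] at h4
    have := hQn Q n
    have hcomm : dist Q (pi • P) = dist (pi • P) Q := dist_comm _ _
    linarith
  have hmul : ∀ n m : ℕ, ((m : ℝ) + 1) * D n ≤ D (n * (m + 1)) + m * (2 * C) := by
    intro n m
    induction m with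
    | zero => simp [Nat.mul_one]
    | succ m ih =>
      have hsa := hG1 (n * (m + 1)) n
      have he : n * (m + 1) + n = n * (m + 2) := by ring
      rw [he] at hsa
      push_cast
      push_cast at ih
      nlinarith [ih, hsa]
  have hDQ2 : ∀ (Q : T) (n : ℕ), D n ≤ n * dist Q (w • Q) + 2 * C := by
    intro Q n
    by_contra hcon
    push_neg at hcon
    set δ : ℝ := D n - n * dist Q (w • Q) - 2 * C with hδdef
    have hδ : 0 < δ := by rw [hδdef]; linarith
    obtain ⟨m, hm⟩ := exists_nat_gt (2 * dist (pi • P) Q / δ)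
    have hmδ : 2 * dist (pi • P) Q < m * δ := by
      rw [div_lt_iff₀ hδ] at hm
      exact hm
    have h1 := hmul n m
    have h2 := hDQ Q (n * (m + 1))
    have hcast : ((n * (m + 1) : ℕ) : ℝ) = n * ((m : ℝ) + 1) := by push_cast; ring
    rw [hcast] at h2
    nlinarith [h1, h2, hmδ, hδ]
  have hnT : Nonempty T := ⟨P⟩
  have hDle : ∀ n : ℕ, D n ≤ n * transLen T w + 2 * C := by
    intro n
    rcases Nat.eq_zero_or_pos n with rfl | hn
    · rw [hD0]; push_cast; linarith
    · have hpos : (0 : ℝ) < n := by exact_mod_cast hn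
      have hinf : (D n - 2 * C) / n ≤ transLen T w := by
        show (D n - 2 * C) / n ≤ ⨅ Q : T, dist Q (w • Q)
        refine le_ciInf fun Q => ?_
        rw [div_le_iff₀ hpos]
        have := hDQ2 Q n
        linarith [this, (mul_comm (n : ℝ) (dist Q (w • Q)))]
      rw [div_le_iff₀ hpos] at hinf
      linarith [hinf, (mul_comm (transLen T w) (n : ℝ))]
  -- KEY inequality
  have hKEY : ∀ j : ℕ, 2 * dist (u • P) P + D j ≤ D 1 + D (j + 1) + 2 * C := by
    intro j
    set L : ℝ := dist (u • P) P with hL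
    have hLc : dist P (u • P) = L := dist_comm _ _
    have hw1P : (w1 ^ 1) • P = w1 • P := by rw [pow_one]
    have hDj : dist (w1 • P) ((w1 ^ (j + 1)) • P) = D j := by
      have : (w1 ^ (j + 1)) • P = w1 • ((w1 ^ j) • P) := by rw [pow_succ', mul_smul]
      rw [this, hiso_dist w1 P ((w1 ^ j) • P)]
    set S1 : ℝ := dist (u • P) (w1 • P) + D (j + 1) with hS1
    set S2 : ℝ := L + D j with hS2
    set S3 : ℝ := dist (u • P) ((w1 ^ (j + 1)) • P) + D 1 with hS3
    have hG20 := hG2 0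
    rw [hw1P] at hG20
    have hG2j := hG2 j
    by_cases hcase : S2 ≤ S3
    · rw [hS2, hS3] at hcase
      rw [hL] at hcase
      have hD1 : D 1 = dist P (w1 • P) := by rw [hD]; dsimp only; rw [hw1P]
      linarith [hG2j, hcase, hLc]
    · have h4b := hT.1 (u • P) P (w1 • P) ((w1 ^ (j + 1)) • P)
      have hre : dist P ((w1 ^ (j+1)) • P) = D (j + 1) := by rw [hD]
      have hre2 : dist P (w1 • P) = D 1 := by rw [hD]; dsimp only; rw [hw1P]
      have h4b' : S2 ≤ max S1 S3 := by
        rw [hS1, hS2, hS3, hL]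
        rw [← hre, ← hre2, ← hDj]
        exact h4b
      have hS2S1 : S2 ≤ S1 := (le_max_iff.1 h4b').resolve_right hcase
      rw [hS1, hS2] at hS2S1
      rw [hL] at hS2S1
      have hD1 : D 1 = dist P (w1 • P) := hre2.symm
      linarith [hG20, hS2S1, hLc]
  have := SubwordProof.core hC D hD0 hDle hKEY
  linarith
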